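/- Let n ≥ 3 and let γ₁, γ₂, γ₃ be real numbers with γ₁ > 0, and assume that either γ₃ > 0, or (γ₂ > 0 and γ₂ ≠ γ₁). Define the hyperplanes Π₁ = span{e₁, …, e_{n−1}}, Π₂ = span{e₁, …, e_{n−2}, e_{n−1} + γ₁ eₙ}, Π₃ = span{e₁, …, e_{n−3}, e_{n−2} + γ₃ eₙ, e_{n−1} + γ₂ eₙ} in ℝⁿ. If g is a real symmetric n×n matrix such that ⟨g v, w⟩ = 0 for all v, w ∈ Π_k, for each k = 1, 2, 3, then g = 0. -/

import Mathlib

open Matrix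

set_option maxHeartbeats 1000000 in
/-- Let `n ≥ 3`, `γ₁ > 0`, and assume `γ₃ > 0` or (`γ₂ > 0` and
`γ₂ ≠ γ₁`). Consider the hyperplanes
`Pi1 = span{e₁,…,e_{n-1}}`, `Pi2 = span{e₁,…,e_{n-2}, e_{n-1}+γ₁eₙ}`,
`Pi3 = span{e₁,…,e_{n-3}, e_{n-2}+γ₃eₙ, e_{n-1}+γ₂eₙ}`. If a real symmetric matrix `g`
satisfies `⟨g v, w⟩ = 0` for all `v, w ∈ Πₖ`, `k = 1,2,3`, then `g = 0`. -/
theorem stmt8 (n : ℕ) (hn : 3 ≤ n) (γ₁ γ₂ γ₃ : ℝ) (hγ₁ : 0 < γ₁)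
    (hcase : 0 < γ₃ ∨ (0 < γ₂ ∧ γ₂ ≠ γ₁))
    (Pi1 Pi2 Pi3 : Submodule ℝ (Fin n → ℝ))
    (hPi1 : Pi1 = Submodule.span ℝ
      {v : Fin n → ℝ | ∃ i : Fin n, (i : ℕ) < n - 1 ∧ v = Pi.single i (1 : ℝ)})
    (hPi2 : Pi2 = Submodule.span ℝ
      ({v : Fin n → ℝ | ∃ i : Fin n, (i : ℕ) < n - 2 ∧ v = Pi.single i (1 : ℝ)} ∪
        {(Pi.single (⟨n - 2, by omega⟩ : Fin n) (1 : ℝ) : Fin n → ℝ) +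
          γ₁ • (Pi.single (⟨n - 1, by omega⟩ : Fin n) (1 : ℝ) : Fin n → ℝ)}))
    (hPi3 : Pi3 = Submodule.span ℝ
      ({v : Fin n → ℝ | ∃ i : Fin n, (i : ℕ) < n - 3 ∧ v = Pi.single i (1 : ℝ)} ∪
        {(Pi.single (⟨n - 3, by omega⟩ : Fin n) (1 : ℝ) : Fin n → ℝ) +
          γ₃ • (Pi.single (⟨n - 1, by omega⟩ : Fin n) (1 : ℝ) : Fin n → ℝ),
         (Pi.single (⟨n - 2, by omega⟩ : Fin n) (1 : ℝ) : Fin n → ℝ) +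
          γ₂ • (Pi.single (⟨n - 1, by omega⟩ : Fin n) (1 : ℝ) : Fin n → ℝ)}))
    (g : Matrix (Fin n) (Fin n) ℝ) (hg : g.IsSymm)
    (h1 : ∀ v ∈ Pi1, ∀ w ∈ Pi1, g.mulVec v ⬝ᵥ w = 0)
    (h2 : ∀ v ∈ Pi2, ∀ w ∈ Pi2, g.mulVec v ⬝ᵥ w = 0)
    (h3 : ∀ v ∈ Pi3, ∀ w ∈ Pi3, g.mulVec v ⬝ᵥ w = 0) :
    g = 0 := by
  have hsym : ∀ i j : Fin n, g i j = g j i := fun i j => hg.apply j i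
  have hm1 : ∀ i : Fin n, (i : ℕ) < n - 1 → Pi.single i (1 : ℝ) ∈ Pi1 := fun i hi => by
    rw [hPi1]; exact Submodule.subset_span ⟨i, hi, rfl⟩
  have hm2 : ∀ i : Fin n, (i : ℕ) < n - 2 → Pi.single i (1 : ℝ) ∈ Pi2 := fun i hi => by
    rw [hPi2]; exact Submodule.subset_span (Or.inl ⟨i, hi, rfl⟩)
  have hmu : (Pi.single (⟨n - 2, by omega⟩ : Fin n) (1 : ℝ) : Fin n → ℝ) +
      γ₁ • (Pi.single (⟨n - 1, by omega⟩ : Fin n) (1 : ℝ) : Fin n → ℝ) ∈ Pi2 := by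
    rw [hPi2]; exact Submodule.subset_span (Or.inr rfl)
  have hmw : (Pi.single (⟨n - 3, by omega⟩ : Fin n) (1 : ℝ) : Fin n → ℝ) +
      γ₃ • (Pi.single (⟨n - 1, by omega⟩ : Fin n) (1 : ℝ) : Fin n → ℝ) ∈ Pi3 := by
    rw [hPi3]; exact Submodule.subset_span (Or.inr (Or.inl rfl))
  have hmx : (Pi.single (⟨n - 2, by omega⟩ : Fin n) (1 : ℝ) : Fin n → ℝ) +
      γ₂ • (Pi.single (⟨n - 1, by omega⟩ : Fin n) (1 : ℝ) : Fin n → ℝ) ∈ Pi3 := by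
    rw [hPi3]; exact Submodule.subset_span (Or.inr (Or.inr rfl))
  clear hPi1 hPi2 hPi3
  set N1 : Fin n := ⟨n - 1, by omega⟩ with hN1
  set N2 : Fin n := ⟨n - 2, by omega⟩ with hN2
  set N3 : Fin n := ⟨n - 3, by omega⟩ with hN3
  have hv1 : (N1 : ℕ) = n - 1 := rfl
  have hv2 : (N2 : ℕ) = n - 2 := rfl
  have hv3 : (N3 : ℕ) = n - 3 := rfl
  -- evaluation lemma
  have key : ∀ i j : Fin n, g.mulVec (Pi.single i 1) ⬝ᵥ (Pi.single j 1) = g j i := by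
    intro i j
    simp [Matrix.mulVec_single, dotProduct_single]
  -- A: entries with both indices < n-1 vanish
  have hA : ∀ i j : Fin n, (i : ℕ) < n - 1 → (j : ℕ) < n - 1 → g i j = 0 := by
    intro i j hi hj
    have := h1 _ (hm1 j hj) _ (hm1 i hi)
    rwa [key] at this
  -- B: g i N1 = 0 for i < n-2
  have hB : ∀ i : Fin n, (i : ℕ) < n - 2 → g i N1 = 0 := by
    intro i hi
    have := h2 _ (hm2 i hi) _ hmu
    rw [dotProduct_add, dotProduct_smul, key, key] at this
    have h0 : g N2 i = 0 := hA N2 i (by omega) (by omega)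
    rw [h0] at this
    have h1' : γ₁ * g N1 i = 0 := by
      simpa [smul_eq_mul] using this
    rw [hsym i N1]
    exact (mul_eq_zero.mp h1').resolve_left (ne_of_gt hγ₁)
  -- expansion of bilinear form on (single a + s • single N1, single b + t • single N1)
  have expand : ∀ (a b : Fin n) (s t : ℝ),
      g.mulVec ((Pi.single a 1 : Fin n → ℝ) + s • (Pi.single N1 1 : Fin n → ℝ)) ⬝ᵥ ((Pi.single b 1 : Fin n → ℝ) + t • (Pi.single N1 1 : Fin n → ℝ))
        = g b a + t * g N1 a + s * g b N1 + s * t * g N1 N1 := by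
    intro a b s t
    rw [Matrix.mulVec_add, Matrix.mulVec_smul, add_dotProduct,
      smul_dotProduct, dotProduct_add, dotProduct_add,
      dotProduct_smul, dotProduct_smul, key, key, key, key]
    simp only [smul_eq_mul]
    ring
  -- C: from u,u
  have hC : γ₁ * g N1 N2 + γ₁ * g N2 N1 + γ₁ * γ₁ * g N1 N1 = 0 := by
    have := h2 _ hmu _ hmu
    rw [expand] at this
    have h0 : g N2 N2 = 0 := hA N2 N2 (by omega) (by omega)
    rw [h0] at this
    linarith [this]
  have hCa : 2 * γ₁ * g N2 N1 + γ₁ * γ₁ * g N1 N1 = 0 := by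
    rw [hsym N1 N2] at hC; linarith
  -- main: b := g N1 N1 = 0 and a := g N2 N1 = 0
  have hb : g N1 N1 = 0 := by
    rcases hcase with hγ₃ | ⟨hγ₂, hne⟩
    · have := h3 _ hmw _ hmw
      rw [expand] at this
      have h0 : g N3 N3 = 0 := hA N3 N3 (by omega) (by omega)
      have h1' : g N3 N1 = 0 := hB N3 (by omega)
      have h2' : g N1 N3 = 0 := by rw [hsym N1 N3]; exact h1'
      rw [h0, h1', h2'] at this
      have h3' : γ₃ * γ₃ * g N1 N1 = 0 := by linarith
      exact (mul_eq_zero.mp h3').resolve_left (by positivity)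
    · have := h3 _ hmx _ hmx
      rw [expand] at this
      have h0 : g N2 N2 = 0 := hA N2 N2 (by omega) (by omega)
      rw [h0, hsym N1 N2] at this
      -- this : 0 + γ₂ * g N2 N1 + γ₂ * g N2 N1 + γ₂ * γ₂ * g N1 N1 = 0
      have hkey : γ₁ * γ₂ * (γ₁ - γ₂) * g N1 N1 = 0 := by nlinarith [hCa, this]
      have : γ₁ * γ₂ * (γ₁ - γ₂) ≠ 0 := by
        have : γ₁ - γ₂ ≠ 0 := sub_ne_zero.mpr (Ne.symm hne)
        positivity
      exact (mul_eq_zero.mp hkey).resolve_left this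
  have ha : g N2 N1 = 0 := by
    have h2' : 2 * γ₁ * g N2 N1 = 0 := by
      rw [hb] at hCa; linarith
    exact (mul_eq_zero.mp h2').resolve_left (by positivity)
  -- conclude
  ext i j
  simp only [Matrix.zero_apply]
  have hcol : ∀ i : Fin n, g i N1 = 0 := by
    intro i
    rcases lt_trichotomy (i : ℕ) (n - 2) with hi | hi | hi
    · exact hB i hi
    · have : i = N2 := Fin.ext (by simpa using hi)
      rw [this]; exact ha
    · have : i = N1 := Fin.ext (by omega)
      rw [this]; exact hb
  rcases lt_or_ge (j : ℕ) (n - 1) with hj | hj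
  · rcases lt_or_ge (i : ℕ) (n - 1) with hi | hi
    · exact hA i j hi hj
    · have : i = N1 := Fin.ext (by omega)
      rw [this, hsym N1 j]
      exact hcol j
  · have : j = N1 := Fin.ext (by omega)
    rw [this]; exact hcol i
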